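/- Let α, β, μ ∈ ℂ with |β| < |α| and |μ| < 1, and let T′(μ) = (|α|² − |β|²)/(α + μβ)² be the complex derivative of T at μ. Then conj(T(μ))·T′(μ)/(1 − |T(μ)|²) = β/(α + μβ) + conj(μ)/(1 − |μ|²). (This is the identity μ̄′ dμ′/(1 − |μ′|²) = d log(α + μβ) + μ̄ dμ/(1 − |μ|²) used to prove the coordinate invariance of the bracket between the conformal 2-metric data.) -/

import Mathlib

/-- The Möbius-type transformation of the conformal 2-metric parameter `μ` induced by
the change of transverse complex coordinate `z = α·z′ + conj(β)·conj(z′)`: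
`T(μ) = (conj β + μ·conj α)/(α + μ·β)`. -/
noncomputable def mobiusT (α β μ : ℂ) : ℂ :=
  ((starRingEnd ℂ) β + μ * (starRingEnd ℂ) α) / (α + μ * β)

lemma abs_sq_eq_mul_conj (z : ℂ) :
    ((‖z‖ : ℝ) : ℂ) ^ 2 = z * (starRingEnd ℂ) z := by
  rw [Complex.mul_conj, ← Complex.sq_norm]
  push_cast
  ring

/-- For `|β| < |α|` and `|μ| < 1`, with `T′(μ) = (|α|² − |β|²)/(α + μβ)²` the complex
derivative of `T` at `μ`, one has
`conj(T(μ))·T′(μ)/(1 − |T(μ)|²) = β/(α + μβ) + conj(μ)/(1 − |μ|²)`; this is the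
identity `μ̄′ dμ′/(1 − |μ′|²) = d log(α + μβ) + μ̄ dμ/(1 − |μ|²)`. -/
theorem mobiusT_log_deriv_identity (α β μ : ℂ)
    (hβα : ‖β‖ < ‖α‖) (hμ : ‖μ‖ < 1) :
    (starRingEnd ℂ) (mobiusT α β μ) *
        (((‖α‖ ^ 2 - ‖β‖ ^ 2 : ℝ) : ℂ) / (α + μ * β) ^ 2) /
        (1 - (‖mobiusT α β μ‖ : ℂ) ^ 2) =
      β / (α + μ * β) + (starRingEnd ℂ) μ / (1 - (‖μ‖ : ℂ) ^ 2) := by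
  have hβ0 : (0:ℝ) ≤ ‖β‖ := norm_nonneg β
  have hμ0 : (0:ℝ) ≤ ‖μ‖ := norm_nonneg μ
  have hD : α + μ * β ≠ 0 := by
    intro h
    have hα : α = -(μ * β) := by linear_combination h
    have : ‖α‖ = ‖μ‖ * ‖β‖ := by
      rw [hα, norm_neg, norm_mul]
    nlinarith
  have hcD : (starRingEnd ℂ) (α + μ * β) ≠ 0 := by
    exact (map_ne_zero (starRingEnd ℂ)).mpr hD
  have h1 : (1 : ℂ) - μ * (starRingEnd ℂ) μ ≠ 0 := by
    rw [Complex.mul_conj]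
    have h2 : Complex.normSq μ < 1 := by
      rw [Complex.normSq_eq_norm_sq]; nlinarith
    intro h
    have := sub_eq_zero.mp h
    have : Complex.normSq μ = 1 := by exact_mod_cast this.symm
    linarith
  have hK : α * (starRingEnd ℂ) α - β * (starRingEnd ℂ) β ≠ 0 := by
    rw [Complex.mul_conj, Complex.mul_conj]
    have h2 : Complex.normSq β < Complex.normSq α := by
      rw [Complex.normSq_eq_norm_sq, Complex.normSq_eq_norm_sq]; nlinarith
    intro h
    have := sub_eq_zero.mp h
    have : Complex.normSq α = Complex.normSq β := by exact_mod_cast this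
    linarith
  have hDN : (α + μ * β) * (starRingEnd ℂ) (α + μ * β) -
      ((starRingEnd ℂ) β + μ * (starRingEnd ℂ) α) *
        (starRingEnd ℂ) ((starRingEnd ℂ) β + μ * (starRingEnd ℂ) α) =
      (α * (starRingEnd ℂ) α - β * (starRingEnd ℂ) β) *
        (1 - μ * (starRingEnd ℂ) μ) := by
    simp only [map_add, map_mul, Complex.conj_conj]
    ring
  unfold mobiusT
  rw [abs_sq_eq_mul_conj, map_div₀]
  push_cast
  rw [abs_sq_eq_mul_conj, abs_sq_eq_mul_conj, abs_sq_eq_mul_conj]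
  rw [div_mul_div_comm]
  have hTden : (1 : ℂ) - ((starRingEnd ℂ) β + μ * (starRingEnd ℂ) α) /
      (α + μ * β) * ((starRingEnd ℂ) ((starRingEnd ℂ) β + μ * (starRingEnd ℂ) α) /
      (starRingEnd ℂ) (α + μ * β)) =
      ((α * (starRingEnd ℂ) α - β * (starRingEnd ℂ) β) *
        (1 - μ * (starRingEnd ℂ) μ)) /
      ((α + μ * β) * (starRingEnd ℂ) (α + μ * β)) := by
    rw [← hDN, sub_div, div_self (mul_ne_zero hD hcD), div_mul_div_comm]
  rw [hTden]
  have hcD' : (starRingEnd ℂ) α + (starRingEnd ℂ) μ * (starRingEnd ℂ) β ≠ 0 := by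
    simpa [map_add, map_mul] using hcD
  simp only [map_add, map_mul, Complex.conj_conj]
  field_simp [hD, hcD', h1, hK]
  have hA : α + β * μ ≠ 0 := by rw [mul_comm]; exact hD
  have hB : 1 - (starRingEnd ℂ) μ * μ ≠ 0 := by rw [mul_comm]; exact h1
  rw [div_add_div _ _ hA hB]
  congr 1
  ring
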